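/- For any string s, the size of the LZ3 parsing of s is less than or equal to the size of any LZ3-type parsing of s. -/

import Mathlib

attribute [local instance] Classical.propDecidable

/-- `PermOv s i ℓ` : the substring of `s` of length `ℓ` starting at 0-indexed position `i`
has an occurrence starting at some earlier position `j < i` (possibly overlapping it). -/
def PermOv {α : Type*} (s : List α) (i ℓ : ℕ) : Prop :=
  ∃ j < i, (s.drop j).take ℓ = (s.drop i).take ℓ

/-- `PermNov s i ℓ` : the substring of `s` of length `ℓ` starting at 0-indexed position `i`
has an occurrence starting at some position `j` with `j + ℓ ≤ i` (not overlapping it). -/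
def PermNov {α : Type*} (s : List α) (i ℓ : ℕ) : Prop :=
  ∃ j, j + ℓ ≤ i ∧ (s.drop j).take ℓ = (s.drop i).take ℓ

/-- `PermOv3 s i ℓ` : the substring of `s` of length `ℓ - 1` starting at 0-indexed position `i`
(i.e. the phrase of length `ℓ` starting at `i` minus its last letter) has an occurrence
starting at some earlier position `j < i` (possibly overlapping). -/
def PermOv3 {α : Type*} (s : List α) (i ℓ : ℕ) : Prop :=
  ∃ j < i, (s.drop j).take (ℓ - 1) = (s.drop i).take (ℓ - 1)

/-- `PermNov3 s i ℓ` : the substring of `s` of length `ℓ - 1` starting at 0-indexed position `i`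
has an occurrence starting at some position `j` with `j + (ℓ - 1) ≤ i` (so this occurrence
ends before position `i`). -/
def PermNov3 {α : Type*} (s : List α) (i ℓ : ℕ) : Prop :=
  ∃ j, j + (ℓ - 1) ≤ i ∧ (s.drop j).take (ℓ - 1) = (s.drop i).take (ℓ - 1)

/-- Length of the greedy phrase starting at 0-indexed position `i`: the largest
`ℓ ≤ |s| - i` permitted by `P`, or `1` (a single letter) if no length is permitted. -/
noncomputable def phraseLen {α : Type*} (P : List α → ℕ → ℕ → Prop) (s : List α) (i : ℕ) : ℕ :=
  max 1 (Nat.findGreatest (fun ℓ => P s i ℓ) (s.length - i))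

/-- The list of phrases of the greedy parsing (w.r.t. the permission predicate `P`)
of the suffix of `s` starting at 0-indexed position `i`. -/
noncomputable def phrasesFrom {α : Type*} (P : List α → ℕ → ℕ → Prop) (s : List α) (i : ℕ) :
    List (List α) :=
  if _h : i < s.length then
    (s.drop i).take (phraseLen P s i) :: phrasesFrom P s (i + phraseLen P s i)
  else []
  termination_by s.length - i
  decreasing_by
    have h1 : 1 ≤ phraseLen P s i := by unfold phraseLen; exact Nat.le_max_left _ _
    omega

/-- The LZ parsing of `s` (phrases may overlap their earlier occurrences). -/
noncomputable def lzPhrases {α : Type*} (s : List α) : List (List α) := phrasesFrom PermOv s 0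
/-- The novLZ parsing of `s` (earlier occurrences may not overlap the phrases). -/
noncomputable def novlzPhrases {α : Type*} (s : List α) : List (List α) := phrasesFrom PermNov s 0
/-- The LZ3 parsing of `s`. -/
noncomputable def lz3Phrases {α : Type*} (s : List α) : List (List α) := phrasesFrom PermOv3 s 0
/-- The novLZ3 parsing of `s`. -/
noncomputable def novlz3Phrases {α : Type*} (s : List α) : List (List α) := phrasesFrom PermNov3 s 0

/-- `Zov`: the size (number of phrases) of the LZ parsing of `s`. -/
noncomputable def zOv {α : Type*} (s : List α) : ℕ := (lzPhrases s).length
/-- `Znon`: the size of the novLZ parsing of `s`. -/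
noncomputable def zNov {α : Type*} (s : List α) : ℕ := (novlzPhrases s).length
/-- `Zov₃`: the size of the LZ3 parsing of `s`. -/
noncomputable def zOv3 {α : Type*} (s : List α) : ℕ := (lz3Phrases s).length
/-- `Znon₃`: the size of the novLZ3 parsing of `s`. -/
noncomputable def zNov3 {α : Type*} (s : List α) : ℕ := (novlz3Phrases s).length

/-- `ts` is an LZ-type parsing of `s`: a decomposition of `s` into nonempty strings such that
each `tᵢ` is a single letter or occurs in `s[1..|t₁⋯tᵢ|-1]`. -/
def IsLZTypeParsing {α : Type*} (s : List α) (ts : List (List α)) : Prop :=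
  ts.flatten = s ∧ (∀ t ∈ ts, t ≠ []) ∧
    ∀ i (h : i < ts.length),
      ts[i].length = 1 ∨ ts[i] <:+: s.take ((ts.take (i + 1)).flatten.length - 1)

/-- `ts` is a novLZ-type parsing of `s`: a decomposition of `s` into nonempty strings such that
each `tᵢ` is a single letter or occurs in `t₁⋯tᵢ₋₁`. -/
def IsNovLZTypeParsing {α : Type*} (s : List α) (ts : List (List α)) : Prop :=
  ts.flatten = s ∧ (∀ t ∈ ts, t ≠ []) ∧
    ∀ i (h : i < ts.length),
      ts[i].length = 1 ∨ ts[i] <:+: (ts.take i).flatten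

/-- `ts` is an LZ3-type parsing of `s`: a decomposition of `s` into nonempty strings such that
each `tᵢ` minus its last letter occurs in `s[1..|t₁⋯tᵢ|-2]`. -/
def IsLZ3TypeParsing {α : Type*} (s : List α) (ts : List (List α)) : Prop :=
  ts.flatten = s ∧ (∀ t ∈ ts, t ≠ []) ∧
    ∀ i (h : i < ts.length),
      ts[i].dropLast <:+: s.take ((ts.take (i + 1)).flatten.length - 2)

/-- `ts` is a novLZ3-type parsing of `s`: a decomposition of `s` into nonempty strings such that
each `tᵢ` minus its last letter occurs in `t₁⋯tᵢ₋₁`. -/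
def IsNovLZ3TypeParsing {α : Type*} (s : List α) (ts : List (List α)) : Prop :=
  ts.flatten = s ∧ (∀ t ∈ ts, t ≠ []) ∧
    ∀ i (h : i < ts.length),
      ts[i].dropLast <:+: (ts.take i).flatten

/-- The LZ3 parsing of any string `s` has the least size among all LZ3-type parsings of `s`. -/

noncomputable def greedyPos {α : Type*} (P : List α → ℕ → ℕ → Prop) (s : List α) : ℕ → ℕ
  | 0 => 0
  | k + 1 => greedyPos P s k + phraseLen P s (greedyPos P s k)

theorem lz3_optimal {α : Type*} (s : List α) (ts : List (List α))
    (h : IsLZ3TypeParsing s ts) : zOv3 s ≤ ts.length := by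
  obtain ⟨hflat, hne, hocc⟩ := h
  set r := ts.length with hr
  set g : ℕ → ℕ := greedyPos PermOv3 s with hgdef
  have hgsucc : ∀ k, g (k + 1) = g k + phraseLen PermOv3 s (g k) := fun k => rfl
  have hpl1 : ∀ i, 1 ≤ phraseLen PermOv3 s i := by
    intro i; unfold phraseLen; exact Nat.le_max_left _ _
  have hsplit : ∀ k : ℕ, s = (ts.take k).flatten ++ (ts.drop k).flatten := by
    intro k; rw [← List.flatten_append, List.take_append_drop, hflat]
  have hT_le : ∀ k : ℕ, ((ts.take k).flatten).length ≤ s.length := by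
    intro k
    conv_rhs => rw [hsplit k]
    rw [List.length_append]
    omega
  have hdrop : ∀ k : ℕ, s.drop ((ts.take k).flatten).length = (ts.drop k).flatten := by
    intro k
    conv_lhs => rw [hsplit k]
    exact List.drop_left
  have hTsucc : ∀ k (hk : k < ts.length),
      ((ts.take (k + 1)).flatten).length = ((ts.take k).flatten).length + (ts[k]'hk).length := by
    intro k hk
    rw [List.take_succ, List.flatten_append, List.length_append,
      List.getElem?_eq_getElem hk]
    simp
  have hTr : ∀ k, r ≤ k → ((ts.take k).flatten).length = s.length := by
    intro k hk
    rw [List.take_of_length_le (by omega), hflat]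
  have hphrase : ∀ k (hk : k < ts.length),
      ts[k] = (s.drop ((ts.take k).flatten).length).take ts[k].length := by
    intro k hk
    rw [hdrop k, List.drop_eq_getElem_cons hk, List.flatten_cons]
    exact (List.take_left' rfl).symm
  have key : ∀ k (hk : k < r), ((ts.take k).flatten).length ≤ g k →
      ((ts.take (k + 1)).flatten).length ≤ g (k + 1) := by
    intro k hk hTg
    have hkk : k < ts.length := by omega
    have hTk1 := hTsucc k (by omega)
    have hlen1 : 1 ≤ (ts[k]'hkk).length :=
      List.length_pos_iff.mpr (hne _ (List.getElem_mem hkk))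
    by_cases hcase : ((ts.take k).flatten).length + (ts[k]'hkk).length ≤ g k + 1
    · have := hgsucc k; have := hpl1 (g k); omega
    · have h4 : ((ts.take k).flatten).length + (ts[k]'hkk).length ≤ s.length := by
        rw [← hTk1]; exact hT_le (k + 1)
      have hlen2 : 2 ≤ (ts[k]'hkk).length := by omega
      obtain ⟨u, v, huv⟩ := hocc k hkk
      have hNle : ((ts.take (k + 1)).flatten).length - 2 ≤ s.length := by
        have := hT_le (k + 1); omega
      have hlenuv : u.length + ((ts[k]'hkk).length - 1) + v.length
          = ((ts.take (k + 1)).flatten).length - 2 := by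
        have := congrArg List.length huv
        simp only [List.length_append, List.length_dropLast, List.length_take] at this
        omega
      have hpN : u.length + 1 ≤ ((ts.take k).flatten).length := by omega
      have h1 : ((s.take (((ts.take (k + 1)).flatten).length - 2)).drop u.length).take
          ((ts[k]'hkk).length - 1) = (ts[k]'hkk).dropLast := by
        rw [← huv, List.append_assoc, List.drop_left]
        exact List.take_left' (by simp [List.length_dropLast])
      have h2 : (s.drop u.length).take ((ts[k]'hkk).length - 1) = (ts[k]'hkk).dropLast := by
        rw [List.drop_take, List.take_take, inf_eq_left.mpr (by omega)] at h1
        exact h1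
      have h3 : (ts[k]'hkk).dropLast
          = (s.drop ((ts.take k).flatten).length).take ((ts[k]'hkk).length - 1) := by
        calc (ts[k]'hkk).dropLast = (ts[k]'hkk).take ((ts[k]'hkk).length - 1) :=
              List.dropLast_eq_take
          _ = ((s.drop ((ts.take k).flatten).length).take (ts[k]'hkk).length).take
                ((ts[k]'hkk).length - 1) := by rw [← hphrase k hkk]
          _ = _ := by rw [List.take_take, inf_eq_left.mpr (by omega)]
      have heq : (s.drop u.length).take ((ts[k]'hkk).length - 1)
          = (s.drop ((ts.take k).flatten).length).take ((ts[k]'hkk).length - 1) := h2.trans h3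
      have hperm : PermOv3 s (g k)
          (((ts.take k).flatten).length + (ts[k]'hkk).length - g k) := by
        refine ⟨u.length + (g k - ((ts.take k).flatten).length), by omega, ?_⟩
        have hdd := congrArg (List.drop (g k - ((ts.take k).flatten).length)) heq
        rw [List.drop_take, List.drop_take, List.drop_drop, List.drop_drop] at hdd
        have e1 : ((ts.take k).flatten).length + (g k - ((ts.take k).flatten).length) = g k := by
          omega
        have e2 : (ts[k]'hkk).length - 1 - (g k - ((ts.take k).flatten).length)
            = ((ts.take k).flatten).length + (ts[k]'hkk).length - g k - 1 := by omega
        rw [e1, e2] at hdd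
        exact hdd
      have hineq : ((ts.take k).flatten).length + (ts[k]'hkk).length - g k
          ≤ phraseLen PermOv3 s (g k) := by
        unfold phraseLen
        exact le_trans (Nat.le_findGreatest (by omega) hperm) (le_max_right _ _)
      have := hgsucc k
      omega
  have hTg : ∀ k, ((ts.take k).flatten).length ≤ g k := by
    intro k
    induction k with
    | zero => simp
    | succ k ih =>
      by_cases hk : k < r
      · exact key k hk ih
      · have e1 := hTr k (by omega)
        have e2 := hTr (k + 1) (by omega)
        have := hgsucc k; have := hpl1 (g k)
        omega
  have final : ∀ j k, r ≤ k + j → (phrasesFrom PermOv3 s (g k)).length ≤ j := by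
    intro j
    induction j with
    | zero =>
      intro k hk
      have h1 : s.length ≤ g k := by
        have := hTg k; have := hTr k (by omega); omega
      rw [phrasesFrom, dif_neg (by omega)]
      simp
    | succ j ih =>
      intro k hk
      by_cases hlt : g k < s.length
      · rw [phrasesFrom, dif_pos hlt]
        simp only [List.length_cons]
        have h2 := ih (k + 1) (by omega)
        rw [hgsucc k] at h2
        omega
      · rw [phrasesFrom, dif_neg hlt]
        simp
  exact final r 0 (by omega)
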